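/- arXiv:1409.5953 — 2 statements merged into one kernel-verified Lean document; each statement's English description precedes it below -/
import Mathlib

section
/- Let L be the restricted wreath product ℤ ≀ ℤ and let w ∈ FreeGroup (Fin 2) be the word w = ⁅x₀, ⁅x₀, x₁⁆⁆, where x₀, x₁ are the free generators and ⁅a,b⁆ = a*b*a⁻¹*b⁻¹. Then (1) w is an E-type iterated identity of L (indeed L has iterational depth at most 2 with respect to w), and (2) w is not an identity of L: there exists f : Fin 2 → L with FreeGroup.lift f w ≠ 1. -/
noncomputable section

/-- The verbal map: evaluate `w` with the variable of index `0` set to `x`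
and the variable of index `i` set to `f i` for `i ≠ 0`. -/
def verbalMap {n : ℕ} [NeZero n] {G : Type*} [Group G] (w : FreeGroup (Fin n))
    (f : Fin n → G) : G → G :=
  fun x => FreeGroup.lift (Function.update f 0 x) w

/-- `w` is an E-type (Engel type) iterated identity of `G`. -/
def IsEIteratedIdentity {n : ℕ} [NeZero n] (w : FreeGroup (Fin n)) (G : Type*) [Group G] : Prop :=
  ∀ f : Fin n → G, ∃ d : ℕ, 1 ≤ d ∧ (verbalMap w f)^[d] (f 0) = 1

/-- `G` has iterational depth at most `D` with respect to `w`. -/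
def DepthAtMost {n : ℕ} [NeZero n] (w : FreeGroup (Fin n)) (G : Type*) [Group G] (D : ℕ) : Prop :=
  ∀ f : Fin n → G, ∃ d : ℕ, 1 ≤ d ∧ d ≤ D ∧ (verbalMap w f)^[d] (f 0) = 1

/-- The shift automorphism action of `ℤ` on finitely supported configurations,
`(k • c) i = c (i - k)`, as a homomorphism into the automorphism group. -/
def wreathShift (R : Type*) [AddCommGroup R] :
    Multiplicative ℤ →* MulAut (Multiplicative (ℤ →₀ R)) where
  toFun k := AddEquiv.toMultiplicative
    (Finsupp.domCongr (Equiv.addRight (Multiplicative.toAdd k)) : (ℤ →₀ R) ≃+ (ℤ →₀ R))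
  map_one' := by
    refine MulEquiv.ext fun c => Multiplicative.toAdd.injective (Finsupp.ext fun i => ?_)
    simp [Finsupp.equivMapDomain_apply, Equiv.Perm.one_symm]
  map_mul' := by
    intro a b
    refine MulEquiv.ext fun c => Multiplicative.toAdd.injective (Finsupp.ext fun i => ?_)
    simp [Finsupp.equivMapDomain_apply, Equiv.Perm.mul_def, Equiv.symm_trans_apply,
      sub_eq_add_neg, add_comm, add_assoc, add_left_comm]

/-- The restricted wreath product `ℤ ≀ ℤ`. -/
abbrev WreathZZ : Type := Multiplicative (ℤ →₀ ℤ) ⋊[wreathShift ℤ] Multiplicative ℤ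

open scoped commutatorElement

open SemidirectProduct

lemma wz_commute (x y : WreathZZ) (hx : x.right = 1) (hy : y.right = 1) :
    Commute x y := by
  show x * y = y * x
  ext
  · simp [SemidirectProduct.mul_left, hx, hy, mul_comm]
  · simp [SemidirectProduct.mul_right, mul_comm]

lemma wz_comm_right (x y : WreathZZ) : (⁅x, y⁆ : WreathZZ).right = 1 := by
  show (rightHom : WreathZZ →* Multiplicative ℤ) ⁅x, y⁆ = 1
  rw [map_commutatorElement]
  exact commutatorElement_eq_one_iff_commute.mpr (mul_comm _ _)

/-- The word `⁅x₀, ⁅x₀, x₁⁆⁆` is an E-type iterated identity of `ℤ ≀ ℤ`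
(of iterational depth at most `2`), but it is not an identity of `ℤ ≀ ℤ`. -/
theorem wreathZZ_engel_word
    (w : FreeGroup (Fin 2))
    (hw : w = ⁅FreeGroup.of (0 : Fin 2), ⁅FreeGroup.of (0 : Fin 2), FreeGroup.of (1 : Fin 2)⁆⁆) :
    (IsEIteratedIdentity w WreathZZ ∧ DepthAtMost w WreathZZ 2) ∧
      ∃ f : Fin 2 → WreathZZ, FreeGroup.lift f w ≠ 1 := by
  have hφ : ∀ (f : Fin 2 → WreathZZ) (x : WreathZZ),
      verbalMap w f x = ⁅x, ⁅x, f 1⁆⁆ := by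
    intro f x
    simp [verbalMap, hw, commutatorElement_def, map_mul, map_inv,
      Function.update_self, Function.update_of_ne (show (1:Fin 2) ≠ 0 by decide)]
  have hdepth : DepthAtMost w WreathZZ 2 := by
    intro f
    refine ⟨2, one_le_two, le_refl _, ?_⟩
    rw [Function.iterate_succ', Function.iterate_one, Function.comp_apply, hφ, hφ]
    set c : WreathZZ := ⁅f 0, ⁅f 0, f 1⁆⁆
    have hc : c.right = 1 := wz_comm_right _ _
    exact commutatorElement_eq_one_iff_commute.mpr (wz_commute _ _ hc (wz_comm_right _ _))
  refine ⟨⟨fun f => (hdepth f).imp (fun d h => ⟨h.1, h.2.2⟩), hdepth⟩, ?_⟩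
  -- nontriviality
  set t : Multiplicative ℤ := Multiplicative.ofAdd 1
  set c : Multiplicative (ℤ →₀ ℤ) := Multiplicative.ofAdd (Finsupp.single 0 1)
  set g : Fin 2 → WreathZZ := ![inr t, inl c] with hg
  refine ⟨g, ?_⟩
  have key : ∀ d : Multiplicative (ℤ →₀ ℤ),
      (⁅(inr t : WreathZZ), inl d⁆ : WreathZZ) = inl (wreathShift ℤ t d * d⁻¹) := by
    intro d
    simp [commutatorElement_def, map_mul, map_inv, inl_aut, mul_assoc]
  have hlift : FreeGroup.lift g w =
      inl (wreathShift ℤ t (wreathShift ℤ t c * c⁻¹) * (wreathShift ℤ t c * c⁻¹)⁻¹) := by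
    have h0 : g 0 = inr t := rfl
    have h1 : g 1 = inl c := rfl
    simp only [hw, map_commutatorElement, FreeGroup.lift_apply_of, h0, h1]
    rw [key, key]
  rw [hlift]
  intro h
  have h2 : (wreathShift ℤ t (wreathShift ℤ t c * c⁻¹) * (wreathShift ℤ t c * c⁻¹)⁻¹ :
      Multiplicative (ℤ →₀ ℤ)) = 1 := by
    exact inl_injective (by simpa using h)
  set e : (ℤ →₀ ℤ) ≃+ (ℤ →₀ ℤ) := Finsupp.domCongr (Equiv.addRight (1 : ℤ)) with he
  have hshift : ∀ x : Multiplicative (ℤ →₀ ℤ),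
      Multiplicative.toAdd (wreathShift ℤ t x) = e (Multiplicative.toAdd x) := fun _ => rfl
  set c0 : ℤ →₀ ℤ := Finsupp.single 0 1 with hc0
  have h4 : e (e c0) + -(e c0) + (c0 + -(e c0)) = 0 := by
    have h3 := congrArg Multiplicative.toAdd h2
    simp only [toAdd_mul, toAdd_inv, hshift, toAdd_one, map_add, map_neg,
      neg_add_rev, neg_neg] at h3
    exact h3
  have hsingle : ∀ a b : ℤ, e (Finsupp.single a b) = Finsupp.single (a + 1) b := by
    intro a b
    rw [he, Finsupp.domCongr_apply, Finsupp.equivMapDomain_single]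
    rfl
  rw [hc0, hsingle, hsingle] at h4
  have h5 := congrArg (fun v : ℤ →₀ ℤ => v 2) h4
  simp only [Finsupp.add_apply, Finsupp.neg_apply, Finsupp.single_apply,
    Finsupp.coe_zero, Pi.zero_apply] at h5
  norm_num at h5
end
end

section
/- Let R ≥ 2, let G_R be the restricted wreath product (ℤ/Rℤ) ≀ ℤ, let m be the product of the distinct prime divisors of R (m = ∏_{p ∈ R.primeFactors} p), and let w ∈ FreeGroup (Fin 2) be the word w = ⁅x₀^m, x₁⁆, where ⁅a,b⁆ = a*b*a⁻¹*b⁻¹. Then (1) w is an E-type iterated identity of G_R, and (2) for every prime p and every k ≥ 1 with p^k ∣ R, the k-th Engel iteration of w is not an identity of G_R: there exists f : Fin 2 → G_R with φ_{w,f}^[k] (f 0) ≠ 1. -/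
noncomputable section

/-- The restricted wreath product `(ℤ/Rℤ) ≀ ℤ`. -/
abbrev WreathZModZ (R : ℕ) : Type :=
  Multiplicative (ℤ →₀ ZMod R) ⋊[wreathShift (ZMod R)] Multiplicative ℤ

open scoped commutatorElement

namespace WreathAux

open SemidirectProduct Multiplicative

variable {R : ℕ}

lemma shift_apply (u : Multiplicative ℤ) (c : Multiplicative (ℤ →₀ ZMod R)) (i : ℤ) :
    Multiplicative.toAdd (wreathShift (ZMod R) u c) i
      = Multiplicative.toAdd c (i - Multiplicative.toAdd u) := rfl

lemma shift_inv_apply (u : Multiplicative ℤ) (c : Multiplicative (ℤ →₀ ZMod R)) :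
    ((wreathShift (ZMod R)) u)⁻¹ c = wreathShift (ZMod R) u⁻¹ c := by rw [← map_inv]

lemma shift_comm (u v : Multiplicative ℤ) (c : Multiplicative (ℤ →₀ ZMod R)) :
    wreathShift (ZMod R) u (wreathShift (ZMod R) v c)
      = wreathShift (ZMod R) v (wreathShift (ZMod R) u c) := by
  refine Multiplicative.toAdd.injective (Finsupp.ext fun i => ?_)
  rw [shift_apply, shift_apply, shift_apply, shift_apply]
  ring_nf

lemma inl_commutator (a : Multiplicative (ℤ →₀ ZMod R)) (y : WreathZModZ R) :
    ⁅(inl a : WreathZModZ R), y⁆ = inl (a * (wreathShift (ZMod R) y.right a)⁻¹) := by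
  rw [commutatorElement_def]
  ext
  · simp [mul_left, mul_right, inv_left, inv_right, mul_comm, mul_assoc, mul_left_comm]
  · simp [mul_left, mul_right, inv_left, inv_right]

lemma inr_commutator (u : Multiplicative ℤ) (b : Multiplicative (ℤ →₀ ZMod R)) (s : Multiplicative ℤ) :
    ⁅(inr u : WreathZModZ R), (inl b : WreathZModZ R) * inr s⁆
      = inl (wreathShift (ZMod R) u b * b⁻¹) := by
  rw [commutatorElement_def]
  ext
  · simp only [mul_left, mul_right, inv_left, inv_right, left_inl, right_inl, left_inr, right_inr,
      map_one, map_mul, map_inv, one_mul, mul_one, shift_inv_apply, MulAut.one_apply]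
    simp only [← map_mul, ← map_inv, mul_inv_cancel_comm]
    rw [← MulAut.mul_apply, ← map_mul, mul_inv_cancel, map_one, MulAut.one_apply]
    simp
  · simp [mul_left, mul_right, inv_left, inv_right]

/-- The homomorphism `c ↦ c * (σ_s c)⁻¹` on the base group. -/
def psiHom (R : ℕ) (s : Multiplicative ℤ) :
    Multiplicative (ℤ →₀ ZMod R) →* Multiplicative (ℤ →₀ ZMod R) :=
  MonoidHom.id _ * (MulEquiv.toMonoidHom (wreathShift (ZMod R) s))⁻¹

lemma psiHom_apply (s : Multiplicative ℤ) (c : Multiplicative (ℤ →₀ ZMod R)) :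
    psiHom R s c = c * (wreathShift (ZMod R) s c)⁻¹ := rfl

lemma psiHom_toAdd (s : Multiplicative ℤ) (d : Multiplicative (ℤ →₀ ZMod R)) (i : ℤ) :
    Multiplicative.toAdd (psiHom R s d) i
      = Multiplicative.toAdd d i - Multiplicative.toAdd d (i - Multiplicative.toAdd s) := by
  rw [psiHom_apply, toAdd_mul, toAdd_inv, Finsupp.add_apply, Finsupp.neg_apply, shift_apply]
  rw [sub_eq_add_neg, sub_eq_add_neg]

lemma psi_iter_pow (s : Multiplicative ℤ) (K n : ℕ) (a : Multiplicative (ℤ →₀ ZMod R)) :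
    (psiHom R s)^[K] (a ^ n) = ((psiHom R s)^[K] a) ^ n := by
  induction K generalizing a with
  | zero => rfl
  | succ K ih => rw [Function.iterate_succ_apply, Function.iterate_succ_apply, map_pow, ih]

lemma T_iter (s : Multiplicative ℤ) (m K : ℕ) (c : Multiplicative (ℤ →₀ ZMod R)) :
    (fun c => (psiHom R s c) ^ m)^[K] c = ((psiHom R s)^[K] c) ^ (m ^ K) := by
  induction K generalizing c with
  | zero => simp
  | succ K ih =>
      rw [Function.iterate_succ_apply, ih, psi_iter_pow, ← pow_mul,
        Function.iterate_succ_apply, ← pow_succ']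

lemma pow_eq_one_of_dvd {n : ℕ} (h : R ∣ n) (a : Multiplicative (ℤ →₀ ZMod R)) :
    a ^ n = 1 := by
  apply Multiplicative.toAdd.injective
  rw [toAdd_pow, toAdd_one]
  ext i
  show (Finsupp.applyAddHom i) (n • Multiplicative.toAdd a) = (0 : ℤ →₀ ZMod R) i
  rw [AddMonoidHom.map_nsmul]
  show n • (Multiplicative.toAdd a i) = (0 : ℤ →₀ ZMod R) i
  rw [nsmul_eq_mul, (ZMod.natCast_eq_zero_iff n R).2 h, zero_mul, Finsupp.zero_apply]

lemma rad_factorization {m p : ℕ} (hm : m = ∏ p ∈ R.primeFactors, p)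
    (hp : p ∈ R.primeFactors) : m.factorization p = 1 := by
  subst hm
  rw [Nat.factorization_prod (fun q hq => (Nat.prime_of_mem_primeFactors hq).ne_zero)]
  rw [Finsupp.finset_sum_apply, Finset.sum_eq_single p]
  · rw [(Nat.prime_of_mem_primeFactors hp).factorization, Finsupp.single_eq_same]
  · intro q hq hqp
    rw [(Nat.prime_of_mem_primeFactors hq).factorization, Finsupp.single_eq_of_ne' hqp]
  · intro h; exact absurd hp h

lemma rad_ne_zero {m : ℕ} (hm : m = ∏ p ∈ R.primeFactors, p) : m ≠ 0 := by
  subst hm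
  exact Finset.prod_ne_zero_iff.2 fun q hq => (Nat.prime_of_mem_primeFactors hq).ne_zero

lemma R_dvd_m_pow {m : ℕ} (hR : 2 ≤ R) (hm : m = ∏ p ∈ R.primeFactors, p) : R ∣ m ^ R := by
  have hR0 : R ≠ 0 := by omega
  have hm0 : m ≠ 0 := rad_ne_zero hm
  rw [← Nat.factorization_le_iff_dvd hR0 (pow_ne_zero _ hm0)]
  rw [Finsupp.le_def]
  intro p
  rw [Nat.factorization_pow, Finsupp.smul_apply, smul_eq_mul]
  by_cases hp : p ∈ R.primeFactors
  · rw [rad_factorization hm hp, mul_one]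
    exact le_of_lt (Nat.factorization_lt p hR0)
  · have h0 : R.factorization p = 0 := Finsupp.notMem_support_iff.mp (by simpa using hp)
    simp [h0]

lemma not_R_dvd {m p k : ℕ} (hR : 2 ≤ R) (hm : m = ∏ p ∈ R.primeFactors, p)
    (hp : p.Prime) (hk : 1 ≤ k) (hdvd : p ^ k ∣ R) : ¬ R ∣ m ^ (k - 1) := by
  intro h
  have hR0 : R ≠ 0 := by omega
  have hpR : p ∈ R.primeFactors :=
    Nat.mem_primeFactors.2 ⟨hp, dvd_trans (dvd_pow_self p (by omega)) hdvd, hR0⟩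
  have hm0 : m ≠ 0 := rad_ne_zero hm
  have h2 : p ^ k ∣ m ^ (k - 1) := hdvd.trans h
  have h3 := (Nat.Prime.pow_dvd_iff_le_factorization hp (pow_ne_zero _ hm0)).1 h2
  rw [Nat.factorization_pow, Finsupp.smul_apply, rad_factorization hm hpR, smul_eq_mul,
    mul_one] at h3
  omega

lemma eq_inl {g : WreathZModZ R} (h : g.right = 1) : g = inl g.left := by
  ext
  · rw [left_inl]
  · rw [right_inl, h]

end WreathAux

open SemidirectProduct WreathAux in
/-- With `m` the product of the distinct prime divisors of `R`, the word `⁅x₀^m, x₁⁆` is an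
E-type iterated identity of `(ℤ/Rℤ) ≀ ℤ`, but if `p^k ∣ R` for a prime `p` and `k ≥ 1`,
then the `k`-th Engel iteration of this word is not an identity of `(ℤ/Rℤ) ≀ ℤ`. -/
theorem wreathZModZ_word (R : ℕ) (hR : 2 ≤ R)
    (m : ℕ) (hm : m = ∏ p ∈ R.primeFactors, p)
    (w : FreeGroup (Fin 2))
    (hw : w = ⁅(FreeGroup.of (0 : Fin 2)) ^ m, FreeGroup.of (1 : Fin 2)⁆) :
    IsEIteratedIdentity w (WreathZModZ R) ∧
      ∀ p : ℕ, p.Prime → ∀ k : ℕ, 1 ≤ k → p ^ k ∣ R →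
        ∃ f : Fin 2 → WreathZModZ R, (verbalMap w f)^[k] (f 0) ≠ 1 := by
  have hverb : ∀ (f : Fin 2 → WreathZModZ R) (x : WreathZModZ R),
      verbalMap w f x = ⁅x ^ m, f 1⁆ := by
    intro f x
    rw [verbalMap, hw, map_commutatorElement, map_pow, FreeGroup.lift_apply_of, FreeGroup.lift_apply_of,
      Function.update_self, Function.update_of_ne (by decide)]
  -- key step lemma: action on the base group
  have hkey : ∀ (f : Fin 2 → WreathZModZ R) (c : Multiplicative (ℤ →₀ ZMod R)),
      verbalMap w f (inl c) = inl ((psiHom R (f 1).right c) ^ m) := by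
    intro f c
    rw [hverb, ← map_pow, inl_commutator]
    congr 1
    rw [psiHom_apply, mul_pow, inv_pow, map_pow]
  have hiter : ∀ (f : Fin 2 → WreathZModZ R) (K : ℕ) (c : Multiplicative (ℤ →₀ ZMod R)),
      (verbalMap w f)^[K] (inl c) = inl (((psiHom R (f 1).right)^[K] c) ^ (m ^ K)) := by
    intro f K
    induction K with
    | zero => intro c; simp
    | succ K ih =>
        intro c
        rw [Function.iterate_succ_apply, hkey, ih, psi_iter_pow, ← pow_mul,
          Function.iterate_succ_apply, ← pow_succ']
  constructor
  · -- E-type iterated identity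
    intro f
    refine ⟨R + 1, by omega, ?_⟩
    have h1 : (verbalMap w f (f 0)).right = 1 := by
      have : rightHom (verbalMap w f (f 0)) = 1 := by
        rw [hverb, map_commutatorElement]
        exact commutatorElement_eq_one_iff_commute.2 (mul_comm _ _)
      exact this
    rw [Function.iterate_succ_apply, eq_inl h1, hiter,
      pow_eq_one_of_dvd (R_dvd_m_pow hR hm), map_one]
  · -- non-vanishing at step k
    intro p hp k hk hdvd
    obtain ⟨j, rfl⟩ : ∃ j, k = j + 1 := ⟨k - 1, by omega⟩
    have hm0 : m ≠ 0 := rad_ne_zero hm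
    set b : Multiplicative (ℤ →₀ ZMod R) :=
      Multiplicative.ofAdd (Finsupp.single (0 : ℤ) (1 : ZMod R)) with hb
    set f : Fin 2 → WreathZModZ R :=
      ![inr (Multiplicative.ofAdd (1 : ℤ)),
        (inl b : WreathZModZ R) * inr (Multiplicative.ofAdd (1 : ℤ))] with hf
    refine ⟨f, ?_⟩
    have hf0 : f 0 = inr (Multiplicative.ofAdd (1 : ℤ)) := rfl
    have hf1 : f 1 = (inl b : WreathZModZ R) * inr (Multiplicative.ofAdd (1 : ℤ)) := rfl
    have hs : Multiplicative.toAdd (f 1).right = (1 : ℤ) := by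
      rw [hf1, mul_right, right_inl, right_inr, one_mul, toAdd_ofAdd]
    set u : Multiplicative ℤ := (Multiplicative.ofAdd (1 : ℤ)) ^ m with hu
    have hu' : Multiplicative.toAdd u = (m : ℤ) := by
      rw [hu, toAdd_pow, toAdd_ofAdd, nsmul_eq_mul, mul_one]
    set c₁ : Multiplicative (ℤ →₀ ZMod R) := wreathShift (ZMod R) u b * b⁻¹ with hc1
    have hstep1 : verbalMap w f (f 0) = inl c₁ := by
      rw [hverb, hf0, ← map_pow, hf1, inr_commutator]
    -- the invariant
    have hinv : ∀ j : ℕ,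
        (∀ i : ℤ, i < 0 → Multiplicative.toAdd ((psiHom R (f 1).right)^[j] c₁) i = 0) ∧
          Multiplicative.toAdd ((psiHom R (f 1).right)^[j] c₁) 0 = -1 := by
      intro j
      induction j with
      | zero =>
          constructor
          · intro i hi
            rw [Function.iterate_zero_apply, hc1, toAdd_mul, toAdd_inv, Finsupp.add_apply,
              Finsupp.neg_apply, shift_apply, hu']
            rw [hb, toAdd_ofAdd]
            rw [Finsupp.single_eq_of_ne' (by omega), Finsupp.single_eq_of_ne' (by omega)]
            simp
          · rw [Function.iterate_zero_apply, hc1, toAdd_mul, toAdd_inv, Finsupp.add_apply,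
              Finsupp.neg_apply, shift_apply, hu']
            rw [hb, toAdd_ofAdd]
            have : (0 : ℤ) ≠ 0 - (m : ℤ) := by
              have : (0:ℤ) < (m:ℤ) := by exact_mod_cast Nat.pos_of_ne_zero hm0
              omega
            rw [Finsupp.single_eq_of_ne' this, Finsupp.single_eq_same]
            simp
      | succ j ih =>
          obtain ⟨ihP, ihE⟩ := ih
          constructor
          · intro i hi
            rw [Function.iterate_succ_apply', psiHom_toAdd, hs,
              ihP i hi, ihP (i - 1) (by omega), sub_zero]
          · rw [Function.iterate_succ_apply', psiHom_toAdd, hs, ihE,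
              ihP (0 - 1) (by omega), sub_zero]
    intro hcon
    rw [Function.iterate_succ_apply, hstep1, hiter] at hcon
    have hbase : ((psiHom R (f 1).right)^[j] c₁) ^ (m ^ j) = 1 := by
      apply inl_injective (φ := wreathShift (ZMod R))
      rw [hcon, map_one]
    have hval := congrArg (fun a => (Multiplicative.toAdd a : ℤ →₀ ZMod R) 0) hbase
    simp only [toAdd_pow, toAdd_one, Finsupp.zero_apply] at hval
    rw [show ((m ^ j • Multiplicative.toAdd ((psiHom R (f 1).right)^[j] c₁)) 0)
        = (Finsupp.applyAddHom (0:ℤ)) (m ^ j • Multiplicative.toAdd ((psiHom R (f 1).right)^[j] c₁))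
        from rfl, AddMonoidHom.map_nsmul] at hval
    have hval' : (m ^ j : ℕ) • (Multiplicative.toAdd ((psiHom R (f 1).right)^[j] c₁) 0)
        = (0 : ZMod R) := hval
    rw [(hinv j).2, nsmul_eq_mul, mul_neg_one, neg_eq_zero] at hval'
    have : ¬ ((m ^ j : ℕ) : ZMod R) = 0 := by
      rw [ZMod.natCast_eq_zero_iff]
      simpa using not_R_dvd hR hm hp hk hdvd
    exact this hval'
end
end
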